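/- Let R > 0, p ∈ [1,∞], Λ := {λ ∈ ℝ₊^m : ‖λ‖_p ≤ R}, and suppose μ (on Θ) and ν (on Λ) satisfy sup_{λ* ∈ Λ} E_{θ∼μ}[ℒ(θ,λ*)] − inf_{θ* ∈ Θ} E_{λ∼ν}[ℒ(θ*,λ)] ≤ ε. Suppose there exists θ' ∈ Θ satisfying all constraints with margin γ > 0, i.e. g_i(θ') ≤ −γ for all i ∈ {1,…,m}, and let B_{g₀} ≥ sup_{θ∈Θ} g₀(θ) − inf_{θ∈Θ} g₀(θ) be a bound on the range of g₀ (assumed finite). Then λ̄ := E_{λ∼ν}[λ] satisfies ‖λ̄‖_p ≤ (ε + B_{g₀})/γ. -/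

import Mathlib

open MeasureTheory

/-- The `p`-norm of a vector in `Fin m → ℝ`, for `p ∈ [1,∞]` (an extended
nonnegative real). -/
noncomputable def pNorm {m : ℕ} (p : ENNReal) (x : Fin m → ℝ) : ℝ :=
  if p = ⊤ then ⨆ i, |x i| else (∑ i, |x i| ^ p.toReal) ^ (1 / p.toReal)

lemma pNorm_le_sum_abs {m : ℕ} {p : ENNReal} (hp : 1 ≤ p) (x : Fin m → ℝ) :
    pNorm p x ≤ ∑ i, |x i| := by
  unfold pNorm
  split_ifs with h
  · rcases isEmpty_or_nonempty (Fin m) with hm | hm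
    · simp [Real.iSup_of_isEmpty]
    · exact ciSup_le fun i =>
        Finset.single_le_sum (fun j _ => abs_nonneg (x j)) (Finset.mem_univ i)
  · set t := p.toReal with ht
    have ht1 : 1 ≤ t := by
      rw [ht, ← ENNReal.toReal_one]
      exact ENNReal.toReal_mono h hp
    have ht0 : 0 < t := lt_of_lt_of_le one_pos ht1
    have hs : 0 ≤ ∑ i, |x i| := Finset.sum_nonneg fun i _ => abs_nonneg _
    have key : ∑ i, |x i| ^ t ≤ (∑ i, |x i|) ^ t := by
      have step : ∀ i ∈ Finset.univ, |x i| ^ t ≤ |x i| * (∑ j, |x j|) ^ (t - 1) := by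
        intro i _
        have h1 : |x i| ≤ ∑ j, |x j| :=
          Finset.single_le_sum (fun j _ => abs_nonneg (x j)) (Finset.mem_univ i)
        calc |x i| ^ t = |x i| ^ (1 + (t - 1)) := by ring_nf
          _ = |x i| ^ (1:ℝ) * |x i| ^ (t - 1) := Real.rpow_add' (abs_nonneg _) (by linarith)
          _ ≤ |x i| * (∑ j, |x j|) ^ (t - 1) := by
              rw [Real.rpow_one]
              exact mul_le_mul_of_nonneg_left
                (Real.rpow_le_rpow (abs_nonneg _) h1 (by linarith)) (abs_nonneg _)
      calc ∑ i, |x i| ^ t ≤ ∑ i, |x i| * (∑ j, |x j|) ^ (t - 1) := Finset.sum_le_sum step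
        _ = (∑ i, |x i|) * (∑ j, |x j|) ^ (t - 1) := by rw [← Finset.sum_mul]
        _ = (∑ i, |x i|) ^ t := by
            rw [← Real.rpow_one_add' hs (by linarith)]; ring_nf
    calc (∑ i, |x i| ^ t) ^ (1/t) ≤ ((∑ i, |x i|) ^ t) ^ (1/t) :=
          Real.rpow_le_rpow
            (Finset.sum_nonneg fun i _ => Real.rpow_nonneg (abs_nonneg _) t) key (by positivity)
      _ = ∑ i, |x i| := by
          rw [← Real.rpow_mul hs, mul_one_div, div_self (ne_of_gt ht0), Real.rpow_one]

lemma pNorm_zero {m : ℕ} {p : ENNReal} (hp : 1 ≤ p) :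
    pNorm p (0 : Fin m → ℝ) = 0 := by
  unfold pNorm
  split_ifs with h
  · rcases isEmpty_or_nonempty (Fin m) with hm | hm
    · simp [Real.iSup_of_isEmpty]
    · simp
  · have ht0 : 0 < p.toReal := by
      have : (1:ℝ) ≤ p.toReal := by
        rw [← ENNReal.toReal_one]; exact ENNReal.toReal_mono h hp
      linarith
    have : ∑ i : Fin m, |(0 : Fin m → ℝ) i| ^ p.toReal = 0 := by
      refine Finset.sum_eq_zero fun i _ => ?_
      simp [Real.zero_rpow (ne_of_gt ht0)]
    rw [this]
    exact Real.zero_rpow (by positivity : (1:ℝ)/p.toReal ≠ 0)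

/-- **Bound on the mean Lagrange multipliers** (Lemma B.2).  In the setting of
the Lagrangian suboptimality theorem, if some `θ'` satisfies every constraint
with margin `γ > 0`, and `B ≥ sup g₀ − inf g₀`, then
`‖λ̄‖_p ≤ (ε + B) / γ` where `λ̄ := E_{λ∼ν}[λ]`. -/
theorem lagrangian_multiplier_bound
    {Θ : Type*} [MeasurableSpace Θ] {m : ℕ}
    (p : ENNReal) (hp : 1 ≤ p)
    (R ε γ B : ℝ) (hR : 0 < R) (hγ : 0 < γ)
    (g0 : Θ → ℝ) (g : Fin m → Θ → ℝ)
    (L : Θ → (Fin m → ℝ) → ℝ)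
    (hL : ∀ θ l, L θ l = g0 θ + ∑ i, l i * g i θ)
    (Λ : Set (Fin m → ℝ))
    (hΛ : Λ = {l | (∀ i, 0 ≤ l i) ∧ pNorm p l ≤ R})
    (μ : Measure Θ) [IsProbabilityMeasure μ]
    (ν : Measure (Fin m → ℝ)) [IsProbabilityMeasure ν]
    (hν : ∀ᵐ l ∂ν, l ∈ Λ)
    (hg0int : Integrable g0 μ) (hgint : ∀ i, Integrable (g i) μ)
    (hLν : ∀ θ' : Θ, Integrable (fun l => L θ' l) ν)
    (hlint : Integrable (fun l => l) ν)
    -- `(μ, ν)` is an `ε`-approximate mixed Nash equilibrium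
    (hNash : ∀ l ∈ Λ, ∀ θ' : Θ, (∫ θ, L θ l ∂μ) - (∫ l', L θ' l' ∂ν) ≤ ε)
    -- a point satisfying all constraints with margin `γ`
    (θ' : Θ) (hθ' : ∀ i, g i θ' ≤ -γ)
    -- `B` bounds the range of the objective
    (hB : ∀ a b : Θ, g0 a - g0 b ≤ B) :
    pNorm p (∫ l, l ∂ν) ≤ (ε + B) / γ := by
  set lb : Fin m → ℝ := ∫ l, l ∂ν with hlb
  have hcomp : ∀ i, Integrable (fun l : Fin m → ℝ => l i) ν := fun i =>
    (ContinuousLinearMap.proj (R := ℝ) (φ := fun _ : Fin m => ℝ) i).integrable_comp hlint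
  have hproj : ∀ i, lb i = ∫ l, l i ∂ν := fun i =>
    ((ContinuousLinearMap.proj (R := ℝ) (φ := fun _ : Fin m => ℝ) i).integral_comp_comm
      hlint).symm
  have hnn : ∀ i, 0 ≤ lb i := by
    intro i
    rw [hproj i]
    refine integral_nonneg_of_ae ?_
    filter_upwards [hν] with l hl
    rw [hΛ] at hl
    exact hl.1 i
  -- 0 ∈ Λ
  have h0 : (0 : Fin m → ℝ) ∈ Λ := by
    rw [hΛ]
    exact ⟨fun i => le_refl 0, by rw [pNorm_zero hp]; exact le_of_lt hR⟩
  -- E_ν L θ' = g0 θ' + ∑ i, lb i * g i θ'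
  have hEν : (∫ l, L θ' l ∂ν) = g0 θ' + ∑ i, lb i * g i θ' := by
    simp_rw [hL]
    rw [integral_add (integrable_const _)
      (integrable_finset_sum _ fun i _ => (hcomp i).mul_const _)]
    rw [integral_finset_sum _ fun i _ => (hcomp i).mul_const _]
    simp only [integral_const, measure_univ, probReal_univ, ENNReal.toReal_one, one_smul]
    congr 1
    refine Finset.sum_congr rfl fun i _ => ?_
    rw [integral_mul_const, ← hproj i]
  -- E_μ L · 0 = ∫ g0
  have hEμ : (∫ θ, L θ (0 : Fin m → ℝ) ∂μ) = ∫ θ, g0 θ ∂μ := by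
    simp [hL]
  have hNash0 := hNash 0 h0 θ'
  rw [hEμ, hEν] at hNash0
  -- ∫ g0 ≥ g0 θ' - B
  have hint : g0 θ' - B ≤ ∫ θ, g0 θ ∂μ := by
    have : (∫ _θ, (g0 θ' - B) ∂μ) ≤ ∫ θ, g0 θ ∂μ :=
      integral_mono (integrable_const _) hg0int fun θ => by linarith [hB θ' θ]
    simpa using this
  have hsum : ∑ i, lb i * g i θ' ≤ ∑ i, lb i * (-γ) := by
    exact Finset.sum_le_sum fun i _ => mul_le_mul_of_nonneg_left (hθ' i) (hnn i)
  have hsum' : ∑ i, lb i * (-γ) = -γ * ∑ i, lb i := by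
    rw [← Finset.sum_mul]; ring
  have hS : γ * (∑ i, lb i) ≤ ε + B := by
    nlinarith [hNash0, hint, hsum, hsum']
  calc pNorm p lb ≤ ∑ i, |lb i| := pNorm_le_sum_abs hp lb
    _ = ∑ i, lb i := Finset.sum_congr rfl fun i _ => abs_of_nonneg (hnn i)
    _ ≤ (ε + B) / γ := by
        rw [le_div_iff₀ hγ]
        linarith [hS]
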